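/- Fix α ∈ (0, 1/2) and let Π : ℤ × ℤ → ℝ be a kernel satisfying |Π(x,y)| ≤ C · ((|x|/|y|)^α + (|y|/|x|)^α)/|x-y| for all |x|, |y| ≥ R with x ≠ y. Then there is a constant C' such that for all T > R, Σ_{R ≤ |x| ≤ T} Σ_{R ≤ |y| ≤ T, y ≠ x} ((log|x| - log|y|)/log T)² |Π(x,y)|² ≤ C'/log T. -/

import Mathlib

open Real Finset

set_option maxHeartbeats 1000000


lemma tele_sum (m : ℤ) (f F : ℤ → ℝ) (T : ℤ) (hmT : m ≤ T)
    (h : ∀ n, m < n → n ≤ T → f n ≤ F n - F (n-1)) :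
    ∑ n ∈ Finset.Ioc m T, f n ≤ F T - F m := by
  have main : ∀ S : ℤ, m ≤ S →
      ((∀ n, m < n → n ≤ S → f n ≤ F n - F (n-1)) →
        ∑ n ∈ Finset.Ioc m S, f n ≤ F S - F m) := by
    refine Int.le_induction ?_ ?_
    · intro _; simp
    · intro S hS ih h
      have he : Finset.Ioc m (S+1) = insert (S+1) (Finset.Ioc m S) := by
        ext n; simp only [Finset.mem_Ioc, Finset.mem_insert]; omega
      rw [he, Finset.sum_insert (by simp [Finset.mem_Ioc])]
      have h1 := h (S+1) (by omega) le_rfl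
      have h2 := ih (fun n hn hn' => h n hn (by omega))
      have he2 : S + 1 - 1 = S := by ring
      rw [he2] at h1
      linarith
  exact main T hmT h

lemma harmonic_bound (T : ℤ) (hT : 1 ≤ T) :
    ∑ n ∈ Finset.Icc (1:ℤ) T, ((n:ℝ))⁻¹ ≤ 1 + Real.log T := by
  have he : Finset.Icc (1:ℤ) T = insert 1 (Finset.Ioc 1 T) := by
    ext n; simp only [Finset.mem_Icc, Finset.mem_Ioc, Finset.mem_insert]; omega
  rw [he, Finset.sum_insert (by simp)]
  have key := tele_sum 1 (fun n => ((n:ℝ))⁻¹) (fun n => Real.log n) T hT ?_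
  · simp only [Int.cast_one, Real.log_one, sub_zero] at key
    norm_num
    linarith
  intro n h1 h2
  have hn1 : (1:ℝ) ≤ (n:ℝ) - 1 := by
    have : (2:ℤ) ≤ n := by omega
    have : (2:ℝ) ≤ (n:ℝ) := by exact_mod_cast this
    linarith
  have hnpos : (0:ℝ) < (n:ℝ) := by linarith
  have hn1pos : (0:ℝ) < (n:ℝ) - 1 := by linarith
  show ((n:ℝ))⁻¹ ≤ Real.log n - Real.log ((n-1 : ℤ) : ℝ)
  have hcast : ((n - 1 : ℤ) : ℝ) = (n:ℝ) - 1 := by push_cast; ring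
  rw [hcast]
  have hlog : Real.log ((n:ℝ) - 1) - Real.log n = Real.log (((n:ℝ)-1)/n) := by
    rw [Real.log_div hn1pos.ne' hnpos.ne']
  have hle : Real.log (((n:ℝ)-1)/n) ≤ ((n:ℝ)-1)/n - 1 :=
    Real.log_le_sub_one_of_pos (div_pos hn1pos hnpos)
  have heq : ((n:ℝ)-1)/n - 1 = -(n:ℝ)⁻¹ := by field_simp; ring
  linarith [hle.trans_eq heq, hlog]

lemma bulk_bound (c : ℝ) (hc0 : 0 ≤ c) (hc1 : c < 1) (N : ℤ) (hN : 1 ≤ N) :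
    ∑ n ∈ Finset.Icc (1:ℤ) N, ((n:ℝ)) ^ (-c) ≤ (N:ℝ) ^ (1-c) / (1-c) := by
  have h1c : (0:ℝ) < 1 - c := by linarith
  have he : Finset.Icc (1:ℤ) N = Finset.Ioc 0 N := by
    ext n; simp only [Finset.mem_Icc, Finset.mem_Ioc]; omega
  rw [he]
  have key := tele_sum 0 (fun n => ((n:ℝ))^(-c)) (fun n => ((n:ℝ))^(1-c)/(1-c)) N (by omega) ?_
  · simp only [Int.cast_zero, Real.zero_rpow h1c.ne', zero_div, sub_zero] at key
    exact key
  intro n h1 h2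
  show ((n:ℝ))^(-c) ≤ ((n:ℝ))^(1-c)/(1-c) - (((n-1:ℤ):ℝ))^(1-c)/(1-c)
  have hcast : ((n - 1 : ℤ) : ℝ) = (n:ℝ) - 1 := by push_cast; ring
  rw [hcast]
  have hnpos : (0:ℝ) < (n:ℝ) := by exact_mod_cast h1
  have hn1 : (0:ℝ) ≤ (n:ℝ) - 1 := by
    have : (1:ℝ) ≤ (n:ℝ) := by exact_mod_cast h1
    linarith
  have hgm := Real.geom_mean_le_arith_mean2_weighted h1c.le hc0
    (div_nonneg hn1 hnpos.le) (zero_le_one) (by ring)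
  rw [Real.one_rpow, mul_one, mul_one] at hgm
  have hdiv : (((n:ℝ)-1)/n) ^ (1-c) = ((n:ℝ)-1)^(1-c) / (n:ℝ)^(1-c) :=
    Real.div_rpow hn1 hnpos.le _
  have hnn : (0:ℝ) < (n:ℝ)^(1-c) := Real.rpow_pos_of_pos hnpos _
  have hsplit : (n:ℝ)^(1-c) = (n:ℝ) * (n:ℝ)^(-c) := by
    rw [show (1-c:ℝ) = 1 + -c by ring, Real.rpow_add hnpos, Real.rpow_one]
  have hmul : ((n:ℝ)-1)^(1-c) ≤ (n:ℝ)^(1-c) * ((1-c)*(((n:ℝ)-1)/n) + c) := by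
    rw [hdiv] at hgm
    calc ((n:ℝ)-1)^(1-c) = ((n:ℝ)-1)^(1-c)/(n:ℝ)^(1-c) * (n:ℝ)^(1-c) := by
          field_simp
      _ ≤ ((1-c)*(((n:ℝ)-1)/n) + c) * (n:ℝ)^(1-c) :=
          mul_le_mul_of_nonneg_right hgm hnn.le
      _ = (n:ℝ)^(1-c) * ((1-c)*(((n:ℝ)-1)/n) + c) := by ring
  have hexp : (n:ℝ)^(1-c) * ((1-c)*(((n:ℝ)-1)/n) + c)
      = (n:ℝ)^(1-c) - (1-c) * (n:ℝ)^(-c) := by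
    rw [hsplit]; field_simp; ring
  rw [hexp] at hmul
  rw [div_sub_div_same, le_div_iff₀ h1c]
  linarith

lemma tail_bound (s : ℝ) (hs : 0 < s) (m T : ℤ) (hm : 1 ≤ m) :
    ∑ n ∈ Finset.Ioc m T, ((n:ℝ)) ^ (-1-s) ≤ (m:ℝ) ^ (-s) / s := by
  have hmpos : (0:ℝ) < (m:ℝ) := by exact_mod_cast hm
  rcases le_or_gt m T with hmT | hmT
  · have hTpos : (0:ℝ) < (T:ℝ) := by
      have : (1:ℤ) ≤ T := le_trans hm hmT
      exact_mod_cast this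
    have key := tele_sum m (fun n => ((n:ℝ))^(-1-s)) (fun n => -((n:ℝ))^(-s)/s) T hmT ?_
    · have hT : (0:ℝ) ≤ ((T:ℝ))^(-s) := (Real.rpow_pos_of_pos hTpos _).le
      calc ∑ n ∈ Finset.Ioc m T, ((n:ℝ))^(-1-s) ≤ -((T:ℝ))^(-s)/s - -((m:ℝ))^(-s)/s := key
        _ ≤ (m:ℝ)^(-s)/s := by
            have : (0:ℝ) ≤ ((T:ℝ))^(-s)/s := div_nonneg hT hs.le
            rw [neg_div, neg_div]
            linarith
    intro n h1 h2
    show ((n:ℝ))^(-1-s) ≤ -((n:ℝ))^(-s)/s - -(((n-1:ℤ):ℝ))^(-s)/s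
    have hcast : ((n - 1 : ℤ) : ℝ) = (n:ℝ) - 1 := by push_cast; ring
    rw [hcast]
    have hn2 : (2:ℝ) ≤ (n:ℝ) := by exact_mod_cast (by omega : (2:ℤ) ≤ n)
    have hnpos : (0:ℝ) < (n:ℝ) := by linarith
    have hn1pos : (0:ℝ) < (n:ℝ) - 1 := by linarith
    -- (n-1)^(-s) ≥ n^(-s) * (1 + s/n)
    have hmulr : ((n:ℝ)-1) = (n:ℝ) * (((n:ℝ)-1)/n) := by field_simp
    have hmr : (((n:ℝ)-1))^(-s) = (n:ℝ)^(-s) * ((((n:ℝ)-1)/n))^(-s) := by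
      rw [← Real.mul_rpow hnpos.le (div_nonneg hn1pos.le hnpos.le)]
      congr 1 <;> field_simp
    have hexp : ((((n:ℝ)-1)/n))^(-s) = Real.exp ((-s) * Real.log (((n:ℝ)-1)/n)) := by
      rw [Real.rpow_def_of_pos (div_pos hn1pos hnpos)]
      ring_nf
    have hlog : Real.log (((n:ℝ)-1)/n) ≤ -(n:ℝ)⁻¹ := by
      have := Real.log_le_sub_one_of_pos (div_pos hn1pos hnpos)
      have heq : ((n:ℝ)-1)/n - 1 = -(n:ℝ)⁻¹ := by field_simp; ring
      linarith
    have hexpge : Real.exp ((-s) * Real.log (((n:ℝ)-1)/n)) ≥ 1 + s * (n:ℝ)⁻¹ := by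
      have h1 : (-s) * Real.log (((n:ℝ)-1)/n) ≥ s * (n:ℝ)⁻¹ := by
        have := mul_le_mul_of_nonneg_left hlog hs.le
        nlinarith
      calc Real.exp ((-s) * Real.log (((n:ℝ)-1)/n)) ≥ 1 + (-s) * Real.log (((n:ℝ)-1)/n) := by
            linarith [Real.add_one_le_exp ((-s) * Real.log (((n:ℝ)-1)/n))]
        _ ≥ 1 + s * (n:ℝ)⁻¹ := by linarith
    have hkey : (((n:ℝ)-1))^(-s) ≥ (n:ℝ)^(-s) * (1 + s * (n:ℝ)⁻¹) := by
      rw [hmr, hexp]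
      exact mul_le_mul_of_nonneg_left hexpge (Real.rpow_pos_of_pos hnpos _).le
    have hsplit : (n:ℝ)^(-1-s) = (n:ℝ)⁻¹ * (n:ℝ)^(-s) := by
      rw [show (-1-s : ℝ) = -1 + -s by ring, Real.rpow_add hnpos, Real.rpow_neg_one]
    rw [hsplit]
    have : (n:ℝ)^(-s) * (1 + s * (n:ℝ)⁻¹) = (n:ℝ)^(-s) + s * ((n:ℝ)⁻¹ * (n:ℝ)^(-s)) := by ring
    rw [this] at hkey
    have hgoal : (↑n:ℝ)⁻¹ * (↑n:ℝ)^(-s) ≤ (((n:ℝ)-1)^(-s) - (n:ℝ)^(-s))/s := by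
      rw [le_div_iff₀ hs]; nlinarith
    have heq2 : -((n:ℝ)^(-s))/s - -(((n:ℝ)-1)^(-s))/s = (((n:ℝ)-1)^(-s) - (n:ℝ)^(-s))/s := by
      ring
    linarith
  · rw [Finset.Ioc_eq_empty (by omega)]
    simp
    positivity


lemma refl_sum (s : Finset ℤ) (a : ℤ) (ha : 1 ≤ a)
    (hs : ∀ y ∈ s, 1 ≤ |y| ∧ |y| ≤ a) (g : ℤ → ℝ)
    (hg : ∀ n : ℤ, 1 ≤ n → n ≤ a → 0 ≤ g n) :
    ∑ y ∈ s, g |y| ≤ 2 * ∑ n ∈ Finset.Icc 1 a, g n := by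
  have hsub : s ⊆ (Finset.Icc (-a) a).erase 0 := by
    intro y hy
    have := hs y hy
    simp only [Finset.mem_erase, Finset.mem_Icc]
    rcases abs_cases y with ⟨h,h'⟩|⟨h,h'⟩ <;> omega
  have h1 : ∑ y ∈ s, g |y| ≤ ∑ y ∈ (Finset.Icc (-a) a).erase 0, g |y| := by
    apply Finset.sum_le_sum_of_subset_of_nonneg hsub
    intro y hy _
    simp only [Finset.mem_erase, Finset.mem_Icc] at hy
    rcases hs' : abs_cases y with _
    exact hg |y| (by rcases abs_cases y with ⟨h,h'⟩|⟨h,h'⟩ <;> omega)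
      (by rcases abs_cases y with ⟨h,h'⟩|⟨h,h'⟩ <;> omega)
  have hsplit : (Finset.Icc (-a) a).erase 0 =
      (Finset.Icc (-a) (-1)) ∪ (Finset.Icc 1 a) := by
    ext n; simp only [Finset.mem_erase, Finset.mem_Icc, Finset.mem_union]; omega
  have hdisj : Disjoint (Finset.Icc (-a) (-1)) (Finset.Icc (1:ℤ) a) := by
    rw [Finset.disjoint_left]
    intro n hn hn'
    simp only [Finset.mem_Icc] at hn hn'
    omega
  rw [hsplit, Finset.sum_union hdisj] at h1
  have hneg : ∑ y ∈ Finset.Icc (-a) (-1), g |y| = ∑ n ∈ Finset.Icc 1 a, g n := by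
    apply Finset.sum_nbij' (i := fun y => -y) (j := fun n => -n)
    · intro y hy; simp only [Finset.mem_Icc] at *; omega
    · intro y hy; simp only [Finset.mem_Icc] at *; omega
    · intro y hy; ring
    · intro y hy; ring
    · intro y hy
      simp only [Finset.mem_Icc] at hy
      have : |y| = -y := by rcases abs_cases y with ⟨h,h'⟩|⟨h,h'⟩ <;> omega
      rw [this]
  have hpos : ∑ y ∈ Finset.Icc (1:ℤ) a, g |y| = ∑ n ∈ Finset.Icc 1 a, g n := by
    apply Finset.sum_congr rfl
    intro y hy
    simp only [Finset.mem_Icc] at hy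
    have : |y| = y := by rcases abs_cases y with ⟨h,h'⟩|⟨h,h'⟩ <;> omega
    rw [this]
  rw [hneg, hpos] at h1
  linarith


lemma rpow_abs_le (r c a : ℝ) (hr : 0 < r) (h : |a| ≤ c) :
    r ^ a ≤ r ^ c + r ^ (-c) := by
  rcases le_or_gt 1 r with h1 | h1
  · have := Real.rpow_le_rpow_of_exponent_le h1 (le_trans (le_abs_self a) h)
    have h2 : (0:ℝ) ≤ r ^ (-c) := (Real.rpow_pos_of_pos hr _).le
    linarith
  · have := Real.rpow_le_rpow_of_exponent_ge hr h1.le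
      (le_trans (neg_le_neg h) (neg_abs_le a))
    have h2 : (0:ℝ) ≤ r ^ c := (Real.rpow_pos_of_pos hr _).le
    linarith

lemma two_le_rpow_add (r c : ℝ) (hr : 0 < r) : 2 ≤ r ^ c + r ^ (-c) := by
  have ha : 0 < r ^ c := Real.rpow_pos_of_pos hr _
  rw [Real.rpow_neg hr.le]
  have hinv : r ^ c * (r ^ c)⁻¹ = 1 := mul_inv_cancel₀ ha.ne'
  nlinarith [sq_nonneg (r ^ c - 1), inv_pos.mpr ha]

lemma log_sq_near (r : ℝ) (h1 : 1/2 ≤ r) (h2 : r ≤ 2) :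
    (Real.log r) ^ 2 ≤ 4 * (r - 1) ^ 2 := by
  have hr : 0 < r := by linarith
  rcases le_or_gt 1 r with hr1 | hr1
  · have ha := Real.log_le_sub_one_of_pos hr
    have hb := Real.log_nonneg hr1
    nlinarith
  · have hinv : 0 < r⁻¹ := inv_pos.mpr hr
    have ha := Real.log_le_sub_one_of_pos hinv
    rw [Real.log_inv] at ha
    have hb : 0 ≤ -Real.log r := by
      have := Real.log_nonpos hr.le hr1.le
      linarith
    have hc : r⁻¹ - 1 ≤ 2 * (1 - r) := by
      have h1r : r⁻¹ ≤ 2 := by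
        rw [inv_le_comm₀ hr (by norm_num)]
        linarith
      have heq : r⁻¹ - 1 = (1 - r) * r⁻¹ := by field_simp
      rw [heq]
      nlinarith
    nlinarith

lemma log_sq_far (r ε : ℝ) (hr : 0 < r) (hε : 0 < ε) :
    (Real.log r) ^ 2 ≤ ((r ^ ε + r ^ (-ε)) / ε) ^ 2 := by
  have key : |Real.log r| ≤ (r ^ ε + r ^ (-ε)) / ε := by
    have hp1 : 0 < r ^ ε := Real.rpow_pos_of_pos hr _
    have hp2 : 0 < r ^ (-ε) := Real.rpow_pos_of_pos hr _
    rcases le_or_gt 1 r with h1 | h1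
    · rw [abs_of_nonneg (Real.log_nonneg h1)]
      refine le_trans (Real.log_le_rpow_div hr.le hε) ?_
      gcongr
      linarith
    · rw [abs_of_nonpos (Real.log_nonpos hr.le h1.le)]
      have hinv : (0:ℝ) < r⁻¹ := inv_pos.mpr hr
      have h := Real.log_le_rpow_div hinv.le hε
      rw [Real.log_inv, Real.inv_rpow hr.le, ← Real.rpow_neg hr.le] at h
      refine le_trans h ?_
      gcongr
      linarith
  calc (Real.log r)^2 = |Real.log r|^2 := (sq_abs _).symm
    _ ≤ ((r ^ ε + r ^ (-ε)) / ε)^2 :=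
        pow_le_pow_left₀ (abs_nonneg _) key 2



lemma prod_bound (r a b : ℝ) (hr : 0 < r) (ha : 0 ≤ a) (hb : 0 ≤ b) :
    (r^a + r^(-a))^2 * (r^b + r^(-b))^2 ≤ 32*(r^(2*a+2*b) + r^(-(2*a+2*b))) := by
  set c := a + b with hc
  have hab : 0 ≤ r^a + r^(-a) := by positivity
  have hbb : 0 ≤ r^b + r^(-b) := by positivity
  have hcc : 0 ≤ r^c + r^(-c) := by positivity
  have h4 : (r^a + r^(-a)) * (r^b + r^(-b)) ≤ 4 * (r^c + r^(-c)) := by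
    have e : (r^a + r^(-a)) * (r^b + r^(-b))
        = r^(a+b) + r^(a+(-b)) + (r^((-a)+b) + r^((-a)+(-b))) := by
      rw [Real.rpow_add hr, Real.rpow_add hr, Real.rpow_add hr, Real.rpow_add hr]
      ring
    rw [e]
    have t1 := rpow_abs_le r c (a+b) hr (by rw [hc, abs_of_nonneg (by linarith)])
    have t2 := rpow_abs_le r c (a+(-b)) hr (by rw [hc]; rcases abs_cases (a + -b) with ⟨h,_⟩|⟨h,_⟩ <;> linarith)
    have t3 := rpow_abs_le r c ((-a)+b) hr (by rw [hc]; rcases abs_cases (-a + b) with ⟨h,_⟩|⟨h,_⟩ <;> linarith)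
    have t4 := rpow_abs_le r c ((-a)+(-b)) hr (by rw [hc]; rcases abs_cases (-a + -b) with ⟨h,_⟩|⟨h,_⟩ <;> linarith)
    linarith
  have hsq : ((r^a + r^(-a)) * (r^b + r^(-b)))^2 ≤ (4 * (r^c + r^(-c)))^2 :=
    pow_le_pow_left₀ (by positivity) h4 2
  have hexp : (r^c + r^(-c))^2 = r^(2*c) + r^(-(2*c)) + 2 := by
    have e1 : r^c * r^c = r^(2*c) := by rw [← Real.rpow_add hr]; ring_nf
    have e2 : r^(-c) * r^(-c) = r^(-(2*c)) := by rw [← Real.rpow_add hr]; ring_nf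
    have e3 : r^c * r^(-c) = 1 := by rw [← Real.rpow_add hr]; simp
    nlinarith [e1, e2, e3]
  have h2le := two_le_rpow_add r (2*c) hr
  calc (r^a + r^(-a))^2 * (r^b + r^(-b))^2
      = ((r^a + r^(-a)) * (r^b + r^(-b)))^2 := by ring
    _ ≤ (4 * (r^c + r^(-c)))^2 := hsq
    _ = 16 * (r^(2*c) + r^(-(2*c)) + 2) := by rw [← hexp]; ring
    _ ≤ 32*(r^(2*c) + r^(-(2*c))) := by linarith
    _ = 32*(r^(2*a+2*b) + r^(-(2*a+2*b))) := by rw [hc]; ring_nf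


lemma inner_bound
    (α C ε : ℝ) (hα0 : 0 < α) (hα2 : α < 1/2) (hC : 0 < C)
    (hεdef : ε = (1-2*α)/4)
    (R T : ℤ) (hR : 1 ≤ R) (hT : R < T)
    (K : ℤ → ℤ → ℝ)
    (hK : ∀ x y : ℤ, R ≤ |x| → R ≤ |y| → x ≠ y →
      |K x y| ≤ C * (((|x| : ℝ) / (|y| : ℝ)) ^ α + ((|y| : ℝ) / (|x| : ℝ)) ^ α) / |(x : ℝ) - (y : ℝ)|)
    (x : ℤ) (hx : x ∈ (Finset.Icc (-T) T).filter (fun x => R ≤ |x|)) :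
    ∑ y ∈ ((Finset.Icc (-T) T).filter (fun y => R ≤ |y|)).erase x,
        (Real.log |(x:ℝ)| - Real.log |(y:ℝ)|)^2 * (K x y)^2
      ≤ (768*C^2 + 36*(32*C^2/ε^2) + 24*(32*C^2/ε^2)/(1-(2*α+2*ε)))
          * (((|x|:ℤ):ℝ))⁻¹ := by
  have hε : 0 < ε := by rw [hεdef]; linarith
  set γ : ℝ := 2*α + 2*ε with hγdef
  have hγ0 : 0 < γ := by positivity
  have hγ1 : γ < 1 := by rw [hγdef, hεdef]; linarith
  have h1γ : 0 < 1 - γ := by linarith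
  set M : ℝ := 32*C^2/ε^2 with hMdef
  have hM : 0 < M := by positivity
  simp only [Finset.mem_filter, Finset.mem_Icc] at hx
  obtain ⟨⟨hxl, hxr⟩, hxR⟩ := hx
  have hxabs1 : 1 ≤ |x| := le_trans hR hxR
  set u : ℝ := ((|x|:ℤ):ℝ) with hu
  have hu1 : (1:ℝ) ≤ u := by rw [hu]; exact_mod_cast hxabs1
  have hupos : (0:ℝ) < u := by linarith
  set X := (Finset.Icc (-T) T).filter (fun y => R ≤ |y|) with hX
  set f : ℤ → ℝ := fun y => (Real.log |(x:ℝ)| - Real.log |(y:ℝ)|)^2 * (K x y)^2 with hf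
  -- common facts for y in the erased set
  have common : ∀ y ∈ X.erase x, ∃ v d : ℝ,
      v = ((|y|:ℤ):ℝ) ∧ 1 ≤ v ∧ 1 ≤ d ∧ d = |(x:ℝ) - (y:ℝ)| ∧
      |u - v| ≤ d ∧
      f y ≤ ((Real.log (u/v))^2) * (C * ((u/v)^α + (u/v)^(-α)))^2 / d^2 := by
    intro y hy
    rw [Finset.mem_erase] at hy
    obtain ⟨hyx, hyX⟩ := hy
    rw [hX, Finset.mem_filter, Finset.mem_Icc] at hyX
    obtain ⟨⟨hyl, hyr⟩, hyR⟩ := hyX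
    have hyabs1 : 1 ≤ |y| := le_trans hR hyR
    set v : ℝ := ((|y|:ℤ):ℝ) with hv
    have hv1 : (1:ℝ) ≤ v := by rw [hv]; exact_mod_cast hyabs1
    have hvpos : (0:ℝ) < v := by linarith
    set d : ℝ := |(x:ℝ) - (y:ℝ)| with hd
    have hdcast : d = ((|x - y|:ℤ):ℝ) := by
      rw [hd, Int.cast_abs]; push_cast; ring_nf
    have hd1 : (1:ℝ) ≤ d := by
      rw [hdcast]
      have : (1:ℤ) ≤ |x - y| := by
        rcases abs_cases (x-y) with ⟨h,h'⟩|⟨h,h'⟩ <;> omega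
      exact_mod_cast this
    have hdpos : (0:ℝ) < d := by linarith
    refine ⟨v, d, rfl, hv1, hd1, rfl, ?_, ?_⟩
    · have hZ : |(|x| - |y|)| ≤ |x - y| := abs_abs_sub_abs_le_abs_sub x y
      have : |u - v| = (((|(|x| - |y|)|):ℤ):ℝ) := by
        rw [hu, hv, Int.cast_abs]; push_cast; ring_nf
      rw [this, hdcast]
      exact_mod_cast hZ
    · have hKb := hK x y hxR hyR (fun h => hyx h.symm)
      have hsum_nonneg : (0:ℝ) ≤ C * ((u/v)^α + (u/v)^(-α)) / d := by positivity
      have hvu : ((v/u) : ℝ)^α = (u/v)^(-α) := by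
        rw [Real.rpow_neg (by positivity), ← Real.inv_rpow (by positivity), inv_div]
      have e1 : (u/v) = |(x:ℝ)|/|(y:ℝ)| := by rw [hu, hv, Int.cast_abs, Int.cast_abs]
      have e2 : (v/u) = |(y:ℝ)|/|(x:ℝ)| := by rw [hu, hv, Int.cast_abs, Int.cast_abs]
      have hKb' : |K x y| ≤ C * ((u/v)^α + (u/v)^(-α)) / d := by
        rw [← hvu, e1, e2, hd]
        exact hKb
      have hK2 : (K x y)^2 ≤ (C * ((u/v)^α + (u/v)^(-α)) / d)^2 := by
        rw [← sq_abs (K x y)]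
        exact pow_le_pow_left₀ (abs_nonneg _) hKb' 2
      have hlogx : Real.log |(x:ℝ)| = Real.log u := by rw [hu, Int.cast_abs]
      have hlogy : Real.log |(y:ℝ)| = Real.log v := by rw [hv, Int.cast_abs]
      have hlogdiv : Real.log |(x:ℝ)| - Real.log |(y:ℝ)| = Real.log (u/v) := by
        rw [hlogx, hlogy, Real.log_div hupos.ne' hvpos.ne']
      show f y ≤ _
      rw [hf]
      simp only []
      rw [hlogdiv]
      calc (Real.log (u/v))^2 * (K x y)^2
          ≤ (Real.log (u/v))^2 * (C * ((u/v)^α + (u/v)^(-α)) / d)^2 :=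
            mul_le_mul_of_nonneg_left hK2 (sq_nonneg _)
        _ = (Real.log (u/v))^2 * (C * ((u/v)^α + (u/v)^(-α)))^2 / d^2 := by
            rw [div_pow]; ring
  -- near sum
  have hnear : ∑ y ∈ (X.erase x).filter (fun y => 2*|x - y| ≤ |x|), f y
      ≤ 768*C^2 * u⁻¹ := by
    have hu' : u = |(x:ℝ)| := by rw [hu, Int.cast_abs]
    have hbound : ∀ y ∈ (X.erase x).filter (fun y => 2*|x - y| ≤ |x|),
        f y ≤ 256*C^2/u^2 := by
      intro y hy
      rw [Finset.mem_filter] at hy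
      obtain ⟨hy0, hnear'⟩ := hy
      obtain ⟨v, d, hv, hv1, hd1, hd, habs, hfb⟩ := common y hy0
      have hvpos : (0:ℝ) < v := by linarith
      have hdpos : (0:ℝ) < d := by linarith
      have h2d : 2*d ≤ u := by
        have hcast : ((2*|x - y|:ℤ):ℝ) ≤ ((|x|:ℤ):ℝ) := by exact_mod_cast hnear'
        push_cast at hcast
        rw [← hu', ← hd] at hcast
        linarith
      have habs' : u - v ≤ d ∧ v - u ≤ d := abs_sub_le_iff.mp habs
      have hvlb : u/2 ≤ v := by linarith [habs'.1]
      have hvub : v ≤ 2*u := by linarith [habs'.2]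
      set r : ℝ := u/v with hr
      have hrpos : (0:ℝ) < r := by positivity
      have hr2 : r ≤ 2 := by rw [hr, div_le_iff₀ hvpos]; linarith
      have hr12 : 1/2 ≤ r := by rw [hr, le_div_iff₀ hvpos]; linarith
      have hlog2 : (Real.log r)^2 ≤ 4*(r-1)^2 := log_sq_near r hr12 hr2
      have h2a : (2:ℝ)^α ≤ 2 := by
        calc (2:ℝ)^α ≤ (2:ℝ)^(1:ℝ) :=
              Real.rpow_le_rpow_of_exponent_le one_le_two (by linarith)
          _ = 2 := Real.rpow_one 2
      have hra : r^α ≤ 2 :=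
        le_trans (Real.rpow_le_rpow hrpos.le hr2 hα0.le) h2a
      have hrinv : r⁻¹ ≤ 2 := by
        rw [inv_le_comm₀ hrpos (by norm_num)]; linarith
      have hrna : r^(-α) ≤ 2 := by
        have he : r^(-α) = (r⁻¹)^α := by
          rw [Real.inv_rpow hrpos.le, ← Real.rpow_neg hrpos.le]
        rw [he]
        exact le_trans (Real.rpow_le_rpow (by positivity) hrinv hα0.le) h2a
      have hs0 : (0:ℝ) ≤ r^α + r^(-α) := by positivity
      have hs4 : r^α + r^(-α) ≤ 4 := by linarith
      have hss : (r^α + r^(-α))^2 ≤ 16 := by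
        have := pow_le_pow_left₀ hs0 hs4 2
        norm_num at this
        linarith
      have hrfactor : (C*(r^α + r^(-α)))^2 ≤ 16*C^2 := by
        have hexp : (C*(r^α + r^(-α)))^2 = C^2 * (r^α + r^(-α))^2 := by ring
        rw [hexp]
        calc C^2 * (r^α + r^(-α))^2 ≤ C^2 * 16 :=
              mul_le_mul_of_nonneg_left hss (sq_nonneg C)
          _ = 16*C^2 := by ring
      have huv2 : (u - v)^2 ≤ d^2 := by
        rw [← sq_abs (u-v)]
        exact pow_le_pow_left₀ (abs_nonneg _) habs 2
      have hr1sq : (r-1)^2 ≤ 4*d^2/u^2 := by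
        have he : r - 1 = (u-v)/v := by rw [hr]; field_simp
        rw [he, div_pow]
        rw [div_le_div_iff₀ (by positivity) (by positivity)]
        have hu2 : u^2 ≤ 4*v^2 := by
          have h2v : u ≤ 2*v := by linarith
          have h := mul_self_le_mul_self hupos.le h2v
          calc u^2 = u*u := sq u
            _ ≤ (2*v)*(2*v) := h
            _ = 4*v^2 := by ring
        have hmul := mul_le_mul huv2 hu2 (sq_nonneg u) (sq_nonneg d)
        linarith [hmul]
      have hnum := mul_le_mul hlog2 hrfactor (sq_nonneg _)
        (by positivity : (0:ℝ) ≤ 4*(r-1)^2)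
      calc f y ≤ (Real.log r)^2 * (C*(r^α + r^(-α)))^2 / d^2 := hfb
        _ ≤ (4*(r-1)^2) * (16*C^2) / d^2 := by gcongr
        _ ≤ (4*(4*d^2/u^2)) * (16*C^2) / d^2 := by gcongr
        _ = 256*C^2/u^2 := by field_simp; ring
    have hcard : (((X.erase x).filter (fun y => 2*|x - y| ≤ |x|)).card : ℝ) ≤ 3*u := by
      have hsub : (X.erase x).filter (fun y => 2*|x - y| ≤ |x|) ⊆
          Finset.Icc (x - |x|) (x + |x|) := by
        intro y hy
        rw [Finset.mem_filter] at hy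
        have := hy.2
        rw [Finset.mem_Icc]
        rcases abs_cases (x - y) with ⟨h,h'⟩|⟨h,h'⟩ <;>
          rcases abs_cases x with ⟨g,g'⟩|⟨g,g'⟩ <;> omega
      have h1 := Finset.card_le_card hsub
      have h2 : (Finset.Icc (x - |x|) (x + |x|)).card = (2*|x| + 1).toNat := by
        rw [Int.card_Icc]; congr 1; ring
      have h3 : (((2*|x| + 1).toNat : ℤ) : ℝ) = 2*u + 1 := by
        rw [Int.toNat_of_nonneg (by positivity)]
        rw [hu]; push_cast; ring
      have h4 : ((((X.erase x).filter (fun y => 2*|x - y| ≤ |x|)).card : ℤ) : ℝ)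
          ≤ (((2*|x| + 1).toNat : ℤ) : ℝ) := by
        exact_mod_cast h2 ▸ h1
      rw [h3] at h4
      push_cast at h4 ⊢
      linarith
    have hsum := Finset.sum_le_card_nsmul _ f _ hbound
    rw [nsmul_eq_mul] at hsum
    calc ∑ y ∈ (X.erase x).filter (fun y => 2*|x - y| ≤ |x|), f y
        ≤ (((X.erase x).filter (fun y => 2*|x - y| ≤ |x|)).card : ℝ) * (256*C^2/u^2) :=
          hsum
      _ ≤ 3*u * (256*C^2/u^2) := by
          apply mul_le_mul_of_nonneg_right hcard (by positivity)
      _ = 768*C^2 * u⁻¹ := by field_simp; ring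
  -- mid sum
  have hu' : u = |(x:ℝ)| := by rw [hu, Int.cast_abs]
  have h2x1 : (1:ℤ) ≤ 2*|x| := by linarith [hxabs1]
  have h2xcast : ((2*|x| : ℤ) : ℝ) = 2*u := by rw [hu]; push_cast; ring
  have idu : u^γ * u^(1-γ) = u := by
    rw [← Real.rpow_add hupos, show γ + (1-γ) = (1:ℝ) by ring, Real.rpow_one]
  have iduγ : u^γ * u^(-γ) = 1 := by
    rw [← Real.rpow_add hupos, show γ + -γ = (0:ℝ) by ring, Real.rpow_zero]
  have h2γ2 : (2:ℝ)^γ ≤ 2 := by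
    calc (2:ℝ)^γ ≤ (2:ℝ)^(1:ℝ) :=
          Real.rpow_le_rpow_of_exponent_le one_le_two (by linarith)
      _ = 2 := Real.rpow_one 2
  have h21γ2 : (2:ℝ)^(1-γ) ≤ 2 := by
    calc (2:ℝ)^(1-γ) ≤ (2:ℝ)^(1:ℝ) :=
          Real.rpow_le_rpow_of_exponent_le one_le_two (by linarith)
      _ = 2 := Real.rpow_one 2
  -- generic far pointwise bound
  have farbound : ∀ y ∈ (X.erase x).filter (fun y => ¬ 2*|x - y| ≤ |x|),
      ∃ v d : ℝ, v = ((|y|:ℤ):ℝ) ∧ 1 ≤ v ∧ 1 ≤ d ∧ d = |(x:ℝ) - (y:ℝ)| ∧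
        u < 2*d ∧ u - v ≤ d ∧ v - u ≤ d ∧
        f y ≤ M * (u^γ * v^(-γ) + v^γ * u^(-γ)) / d^2 := by
    intro y hy
    rw [Finset.mem_filter] at hy
    obtain ⟨hy0, hfar'⟩ := hy
    obtain ⟨v, d, hv, hv1, hd1, hd, habs, hfb⟩ := common y hy0
    have hvpos : (0:ℝ) < v := by linarith
    have hdpos : (0:ℝ) < d := by linarith
    have habs' : u - v ≤ d ∧ v - u ≤ d := abs_sub_le_iff.mp habs
    have h2d : u < 2*d := by
      have hZ : |x| < 2*|x - y| := by omega
      have hcast : ((|x|:ℤ):ℝ) < ((2*|x - y|:ℤ):ℝ) := by exact_mod_cast hZ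
      push_cast at hcast
      rw [← hu', ← hd] at hcast
      linarith
    refine ⟨v, d, hv, hv1, hd1, hd, h2d, habs'.1, habs'.2, ?_⟩
    set r : ℝ := u/v with hr
    have hrpos : (0:ℝ) < r := by positivity
    have hlogfar := log_sq_far r ε hrpos hε
    have hprod := prod_bound r ε α hrpos hε.le hα0.le
    have hexpid : 2*ε + 2*α = γ := by rw [hγdef]; ring
    rw [hexpid] at hprod
    have hrγ : r^γ = u^γ * v^(-γ) := by
      rw [hr, Real.div_rpow hupos.le hvpos.le, Real.rpow_neg hvpos.le, div_eq_mul_inv]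
    have hrnγ : r^(-γ) = v^γ * u^(-γ) := by
      rw [hr, ← inv_div, Real.inv_rpow (by positivity), ← Real.rpow_neg (by positivity),
        Real.div_rpow hvpos.le hupos.le, Real.rpow_neg hupos.le, div_eq_mul_inv]
      simp
    have hKnn : (0:ℝ) ≤ (C*(r^α + r^(-α)))^2 := sq_nonneg _
    have step1 : f y ≤ ((r^ε + r^(-ε))/ε)^2 * (C*(r^α + r^(-α)))^2 / d^2 := by
      refine le_trans hfb ?_
      gcongr
    have step2 : ((r^ε + r^(-ε))/ε)^2 * (C*(r^α + r^(-α)))^2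
        = (C^2/ε^2) * ((r^ε + r^(-ε))^2 * (r^α + r^(-α))^2) := by
      field_simp
    have step3 : (C^2/ε^2) * ((r^ε + r^(-ε))^2 * (r^α + r^(-α))^2)
        ≤ (C^2/ε^2) * (32*(r^γ + r^(-γ))) :=
      mul_le_mul_of_nonneg_left hprod (by positivity)
    have step4 : (C^2/ε^2) * (32*(r^γ + r^(-γ))) = M * (u^γ * v^(-γ) + v^γ * u^(-γ)) := by
      rw [hrγ, hrnγ, hMdef]
      ring
    calc f y ≤ ((r^ε + r^(-ε))/ε)^2 * (C*(r^α + r^(-α)))^2 / d^2 := step1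
      _ = (C^2/ε^2) * ((r^ε + r^(-ε))^2 * (r^α + r^(-α))^2) / d^2 := by rw [step2]
      _ ≤ (C^2/ε^2) * (32*(r^γ + r^(-γ))) / d^2 := by gcongr
      _ = M * (u^γ * v^(-γ) + v^γ * u^(-γ)) / d^2 := by rw [step4]
  have hmid : ∑ y ∈ ((X.erase x).filter (fun y => ¬ 2*|x - y| ≤ |x|)).filter
        (fun y => |y| ≤ 2*|x|), f y
      ≤ (32*M + 16*M/(1-γ)) * u⁻¹ := by
    set g2 : ℤ → ℝ := fun n => 4*M*u^γ*((n:ℤ):ℝ)^(-γ)/u^2 + 8*M/u^2 with hg2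
    set s2 := ((X.erase x).filter (fun y => ¬ 2*|x - y| ≤ |x|)).filter
        (fun y => |y| ≤ 2*|x|) with hs2
    have hstep : ∀ y ∈ s2, f y ≤ g2 |y| := by
      intro y hy
      rw [hs2, Finset.mem_filter] at hy
      obtain ⟨hy1, hy2x⟩ := hy
      obtain ⟨v, d, hv, hv1, hd1, hd, h2d, hd2, hd3, hfb⟩ := farbound y hy1
      have hvpos : (0:ℝ) < v := by linarith
      have hdpos : (0:ℝ) < d := by linarith
      have hv2u : v ≤ 2*u := by
        have : ((|y|:ℤ):ℝ) ≤ ((2*|x|:ℤ):ℝ) := by exact_mod_cast hy2x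
        rw [h2xcast] at this
        rw [hv]
        linarith
      have hd2inv : 1/d^2 ≤ 4/u^2 := by
        rw [div_le_div_iff₀ (by positivity) (by positivity)]
        nlinarith [h2d, hupos, hdpos]
      have hvγ2 : v^γ * u^(-γ) ≤ 2 := by
        have h1 : v^γ ≤ (2*u)^γ := Real.rpow_le_rpow hvpos.le hv2u hγ0.le
        have h2 : (2*u)^γ = 2^γ * u^γ := Real.mul_rpow (by norm_num) hupos.le
        have h3 : v^γ ≤ 2 * u^γ := by
          rw [h2] at h1
          have := mul_le_mul_of_nonneg_right h2γ2 (Real.rpow_pos_of_pos hupos γ).le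
          linarith
        have h4 : (0:ℝ) ≤ u^(-γ) := (Real.rpow_pos_of_pos hupos _).le
        calc v^γ * u^(-γ) ≤ (2*u^γ) * u^(-γ) := mul_le_mul_of_nonneg_right h3 h4
          _ = 2*(u^γ * u^(-γ)) := by ring
          _ = 2 := by rw [iduγ]; norm_num
      have hnn : (0:ℝ) ≤ M * (u^γ * v^(-γ) + v^γ * u^(-γ)) := by
        have : (0:ℝ) ≤ u^γ * v^(-γ) := by positivity
        have : (0:ℝ) ≤ v^γ * u^(-γ) := by positivity
        positivity
      calc f y ≤ M * (u^γ * v^(-γ) + v^γ * u^(-γ)) / d^2 := hfb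
        _ = M * (u^γ * v^(-γ) + v^γ * u^(-γ)) * (1/d^2) := by ring
        _ ≤ M * (u^γ * v^(-γ) + v^γ * u^(-γ)) * (4/u^2) :=
            mul_le_mul_of_nonneg_left hd2inv hnn
        _ = 4*M*u^γ*v^(-γ)/u^2 + (v^γ * u^(-γ)) * (4*M/u^2) := by ring
        _ ≤ 4*M*u^γ*v^(-γ)/u^2 + 2 * (4*M/u^2) := by
            have : (0:ℝ) ≤ 4*M/u^2 := by positivity
            nlinarith [mul_le_mul_of_nonneg_right hvγ2 this]
        _ = g2 |y| := by rw [hg2]; simp only []; rw [← hv]; ring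
    have hsum1 : ∑ y ∈ s2, f y ≤ ∑ y ∈ s2, g2 |y| := Finset.sum_le_sum hstep
    have hmem : ∀ y ∈ s2, 1 ≤ |y| ∧ |y| ≤ 2*|x| := by
      intro y hy
      rw [hs2, Finset.mem_filter] at hy
      obtain ⟨hy1, hy2⟩ := hy
      rw [Finset.mem_filter, Finset.mem_erase] at hy1
      have hyR : R ≤ |y| := (Finset.mem_filter.mp hy1.1.2).2
      exact ⟨le_trans hR hyR, hy2⟩
    have hgnn : ∀ n : ℤ, 1 ≤ n → n ≤ 2*|x| → 0 ≤ g2 n := by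
      intro n h1 h2
      have hnpos : (0:ℝ) < (n:ℝ) := by exact_mod_cast h1
      rw [hg2]
      positivity
    have hrefl := refl_sum s2 (2*|x|) h2x1 hmem g2 hgnn
    have hbulk := bulk_bound γ hγ0.le hγ1 (2*|x|) h2x1
    have hcard : ((Finset.Icc (1:ℤ) (2*|x|)).card : ℝ) ≤ 2*u := by
      rw [Int.card_Icc]
      have : (2*|x| + 1 - 1) = 2*|x| := by ring
      rw [this]
      have h3 : (((2*|x|).toNat : ℤ) : ℝ) = 2*u := by
        rw [Int.toNat_of_nonneg (by positivity)]
        exact h2xcast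
      push_cast at h3 ⊢
      linarith
    have hsumg2 : ∑ n ∈ Finset.Icc (1:ℤ) (2*|x|), g2 n
        ≤ 4*M*u^γ/u^2 * ((2*u)^(1-γ)/(1-γ)) + (2*u) * (8*M/u^2) := by
      rw [hg2]
      simp only []
      rw [Finset.sum_add_distrib, Finset.sum_const, nsmul_eq_mul]
      have e1 : ∀ n : ℤ, 4*M*u^γ*((n:ℤ):ℝ)^(-γ)/u^2 = (4*M*u^γ/u^2) * ((n:ℝ))^(-γ) := by
        intro n; ring
      rw [Finset.sum_congr rfl (fun n _ => e1 n), ← Finset.mul_sum]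
      have hc1 : (0:ℝ) ≤ 4*M*u^γ/u^2 := by positivity
      have hb2 : ∑ n ∈ Finset.Icc (1:ℤ) (2*|x|), ((n:ℝ))^(-γ) ≤ (2*u)^(1-γ)/(1-γ) := by
        rw [← h2xcast]
        exact hbulk
      have hpos2 : (0:ℝ) ≤ 8*M/u^2 := by positivity
      have := mul_le_mul_of_nonneg_left hb2 hc1
      have := mul_le_mul_of_nonneg_right hcard hpos2
      linarith
    have hfinal : 2 * (4*M*u^γ/u^2 * ((2*u)^(1-γ)/(1-γ)) + (2*u) * (8*M/u^2))
        ≤ (32*M + 16*M/(1-γ)) * u⁻¹ := by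
      have h2u1γ : (2*u)^(1-γ) ≤ 2*u^(1-γ) := by
        rw [Real.mul_rpow (by norm_num) hupos.le]
        have := mul_le_mul_of_nonneg_right h21γ2 (Real.rpow_pos_of_pos hupos (1-γ)).le
        linarith
      have hA : 4*M*u^γ/u^2 * ((2*u)^(1-γ)/(1-γ)) ≤ 4*M*u^γ/u^2 * ((2*u^(1-γ))/(1-γ)) := by
        gcongr
      have hB : 4*M*u^γ/u^2 * ((2*u^(1-γ))/(1-γ)) = 8*M/(1-γ) * (u^γ * u^(1-γ)) / u^2 := by
        ring
      have hC2 : 8*M/(1-γ) * (u^γ * u^(1-γ)) / u^2 = 8*M/(1-γ) * u⁻¹ := by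
        rw [idu]
        field_simp
      have hD : (2*u) * (8*M/u^2) = 16*M*u⁻¹ := by
        field_simp
        ring
      have hE := hA.trans_eq (hB.trans hC2)
      calc 2 * (4*M*u^γ/u^2 * ((2*u)^(1-γ)/(1-γ)) + (2*u) * (8*M/u^2))
          ≤ 2 * (8*M/(1-γ) * u⁻¹ + 16*M*u⁻¹) := by rw [hD]; linarith
        _ = (32*M + 16*M/(1-γ)) * u⁻¹ := by ring
    calc ∑ y ∈ s2, f y ≤ ∑ y ∈ s2, g2 |y| := hsum1
      _ ≤ 2 * ∑ n ∈ Finset.Icc (1:ℤ) (2*|x|), g2 n := hrefl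
      _ ≤ 2 * (4*M*u^γ/u^2 * ((2*u)^(1-γ)/(1-γ)) + (2*u) * (8*M/u^2)) := by linarith
      _ ≤ (32*M + 16*M/(1-γ)) * u⁻¹ := hfinal
  -- tail sum
  have htail : ∑ y ∈ ((X.erase x).filter (fun y => ¬ 2*|x - y| ≤ |x|)).filter
        (fun y => ¬ |y| ≤ 2*|x|), f y
      ≤ (4*M + 8*M/(1-γ)) * u⁻¹ := by
    have hT1 : (1:ℤ) ≤ T := by omega
    set g3 : ℤ → ℝ := fun n => if 2*|x| < n then
        4*M*(u^γ*((n:ℤ):ℝ)^(-1-(1+γ)) + u^(-γ)*((n:ℤ):ℝ)^(-1-(1-γ))) else 0 with hg3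
    set s3 := ((X.erase x).filter (fun y => ¬ 2*|x - y| ≤ |x|)).filter
        (fun y => ¬ |y| ≤ 2*|x|) with hs3
    have hstep : ∀ y ∈ s3, f y ≤ g3 |y| := by
      intro y hy
      rw [hs3, Finset.mem_filter] at hy
      obtain ⟨hy1, hy2x⟩ := hy
      push_neg at hy2x
      obtain ⟨v, d, hv, hv1, hd1, hd, h2d, hd2, hd3, hfb⟩ := farbound y hy1
      have hvpos : (0:ℝ) < v := by linarith
      have hdpos : (0:ℝ) < d := by linarith
      have h2uv : 2*u < v := by
        have : ((2*|x|:ℤ):ℝ) < ((|y|:ℤ):ℝ) := by exact_mod_cast hy2x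
        rw [h2xcast] at this
        rw [hv]
        linarith
      have hdv : v/2 ≤ d := by linarith
      have hd2inv : 1/d^2 ≤ 4/v^2 := by
        rw [div_le_div_iff₀ (by positivity) (by positivity)]
        nlinarith [hdv, hvpos, hdpos]
      have idv1 : v^(-γ) * (1/v^2) = v^(-1-(1+γ)) := by
        rw [show (-1-(1+γ)) = -γ + (-2:ℝ) by ring, Real.rpow_add hvpos (-γ) (-2)]
        congr 1
        rw [show ((-2):ℝ) = -((2:ℕ):ℝ) by norm_num, Real.rpow_neg hvpos.le,
          Real.rpow_natCast]
        norm_num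
      have idv2 : v^γ * (1/v^2) = v^(-1-(1-γ)) := by
        rw [show (-1-(1-γ)) = γ + (-2:ℝ) by ring, Real.rpow_add hvpos γ (-2)]
        congr 1
        rw [show ((-2):ℝ) = -((2:ℕ):ℝ) by norm_num, Real.rpow_neg hvpos.le,
          Real.rpow_natCast]
        norm_num
      have hnn : (0:ℝ) ≤ M * (u^γ * v^(-γ) + v^γ * u^(-γ)) := by
        have h1 : (0:ℝ) ≤ u^γ * v^(-γ) := by positivity
        have h2 : (0:ℝ) ≤ v^γ * u^(-γ) := by positivity
        positivity
      have hcond : 2*|x| < |y| := hy2x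
      have hval : g3 |y| = 4*M*(u^γ*v^(-1-(1+γ)) + u^(-γ)*v^(-1-(1-γ))) := by
        rw [hg3]
        simp only [hcond, if_true]
        rw [← hv]
      rw [hval]
      calc f y ≤ M * (u^γ * v^(-γ) + v^γ * u^(-γ)) / d^2 := hfb
        _ = M * (u^γ * v^(-γ) + v^γ * u^(-γ)) * (1/d^2) := by ring
        _ ≤ M * (u^γ * v^(-γ) + v^γ * u^(-γ)) * (4/v^2) :=
            mul_le_mul_of_nonneg_left hd2inv hnn
        _ = 4*M*(u^γ*(v^(-γ) * (1/v^2)) + u^(-γ)*(v^γ * (1/v^2))) := by ring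
        _ = 4*M*(u^γ*v^(-1-(1+γ)) + u^(-γ)*v^(-1-(1-γ))) := by rw [idv1, idv2]
    have hsum1 : ∑ y ∈ s3, f y ≤ ∑ y ∈ s3, g3 |y| := Finset.sum_le_sum hstep
    have hmem : ∀ y ∈ s3, 1 ≤ |y| ∧ |y| ≤ T := by
      intro y hy
      rw [hs3, Finset.mem_filter] at hy
      obtain ⟨hy1, _⟩ := hy
      rw [Finset.mem_filter, Finset.mem_erase] at hy1
      obtain ⟨⟨_, hyX⟩, _⟩ := hy1
      rw [Finset.mem_filter, Finset.mem_Icc] at hyX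
      constructor
      · exact le_trans hR hyX.2
      · rcases abs_cases y with ⟨h,h'⟩|⟨h,h'⟩ <;> omega
    have hgnn : ∀ n : ℤ, 1 ≤ n → n ≤ T → 0 ≤ g3 n := by
      intro n h1 h2
      rw [hg3]
      by_cases hc : 2*|x| < n
      · simp only [hc, if_true]
        have hnpos : (0:ℝ) < (n:ℝ) := by exact_mod_cast h1
        positivity
      · simp only [hc, if_false]
        exact le_refl 0
    have hrefl := refl_sum s3 T hT1 hmem g3 hgnn
    have hfilter : ∑ n ∈ Finset.Icc (1:ℤ) T, g3 n
        = ∑ n ∈ Finset.Ioc (2*|x|) T,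
            4*M*(u^γ*((n:ℤ):ℝ)^(-1-(1+γ)) + u^(-γ)*((n:ℤ):ℝ)^(-1-(1-γ))) := by
      rw [hg3]
      rw [← Finset.sum_filter]
      congr 1
      ext n
      simp only [Finset.mem_filter, Finset.mem_Icc, Finset.mem_Ioc]
      omega
    have htail1 := tail_bound (1+γ) (by linarith) (2*|x|) T h2x1
    have htail2 := tail_bound (1-γ) h1γ (2*|x|) T h2x1
    rw [h2xcast] at htail1 htail2
    -- bound the two tails
    have hmulpow1 : (2*u)^(-(1+γ)) = 2^(-(1+γ)) * u^(-(1+γ)) :=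
      Real.mul_rpow (by norm_num) hupos.le
    have hmulpow2 : (2*u)^(-(1-γ)) = 2^(-(1-γ)) * u^(-(1-γ)) :=
      Real.mul_rpow (by norm_num) hupos.le
    have h2p1 : (2:ℝ)^(-(1+γ)) ≤ 1/2 := by
      calc (2:ℝ)^(-(1+γ)) ≤ (2:ℝ)^((-1):ℝ) :=
            Real.rpow_le_rpow_of_exponent_le one_le_two (by linarith)
        _ = 1/2 := by
            rw [Real.rpow_neg_one]
            norm_num
    have h2p2 : (2:ℝ)^(-(1-γ)) ≤ 1 := by
      calc (2:ℝ)^(-(1-γ)) ≤ (2:ℝ)^(0:ℝ) :=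
            Real.rpow_le_rpow_of_exponent_le one_le_two (by linarith)
        _ = 1 := Real.rpow_zero 2
    have i1 : u^γ * u^(-(1+γ)) = u⁻¹ := by
      rw [← Real.rpow_add hupos, show γ + -(1+γ) = (-1:ℝ) by ring, Real.rpow_neg_one]
    have i2 : u^(-γ) * u^(-(1-γ)) = u⁻¹ := by
      rw [← Real.rpow_add hupos, show -γ + -(1-γ) = (-1:ℝ) by ring, Real.rpow_neg_one]
    have hup1 : (0:ℝ) ≤ u^(-(1+γ)) := (Real.rpow_pos_of_pos hupos _).le
    have hup2 : (0:ℝ) ≤ u^(-(1-γ)) := (Real.rpow_pos_of_pos hupos _).le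
    have hugp : (0:ℝ) < u^γ := Real.rpow_pos_of_pos hupos _
    have hugn : (0:ℝ) < u^(-γ) := Real.rpow_pos_of_pos hupos _
    have hb1 : (2*u)^(-(1+γ))/(1+γ) ≤ (1/2) * u^(-(1+γ)) := by
      have h1 : (2*u)^(-(1+γ)) ≤ (1/2) * u^(-(1+γ)) := by
        rw [hmulpow1]
        exact mul_le_mul_of_nonneg_right h2p1 hup1
      have h2 : (2*u)^(-(1+γ))/(1+γ) ≤ (2*u)^(-(1+γ)) := by
        apply div_le_self (by positivity) (by linarith)
      linarith
    have hb2 : (2*u)^(-(1-γ))/(1-γ) ≤ u^(-(1-γ))/(1-γ) := by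
      have h1 : (2*u)^(-(1-γ)) ≤ u^(-(1-γ)) := by
        rw [hmulpow2]
        have := mul_le_mul_of_nonneg_right h2p2 hup2
        linarith
      gcongr
    have hcoef1 : (0:ℝ) ≤ 4*M*u^γ := by positivity
    have hcoef2 : (0:ℝ) ≤ 4*M*u^(-γ) := by positivity
    have hsumtail : ∑ n ∈ Finset.Ioc (2*|x|) T,
        4*M*(u^γ*((n:ℤ):ℝ)^(-1-(1+γ)) + u^(-γ)*((n:ℤ):ℝ)^(-1-(1-γ)))
        ≤ 4*M*u^γ * ((1/2) * u^(-(1+γ))) + 4*M*u^(-γ) * (u^(-(1-γ))/(1-γ)) := by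
      have he : ∀ n : ℤ, 4*M*(u^γ*((n:ℤ):ℝ)^(-1-(1+γ)) + u^(-γ)*((n:ℤ):ℝ)^(-1-(1-γ)))
          = (4*M*u^γ) * ((n:ℝ))^(-1-(1+γ)) + (4*M*u^(-γ)) * ((n:ℝ))^(-1-(1-γ)) :=
        fun n => by ring
      rw [Finset.sum_congr rfl (fun n _ => he n), Finset.sum_add_distrib,
        ← Finset.mul_sum, ← Finset.mul_sum]
      have t1 := mul_le_mul_of_nonneg_left (htail1.trans hb1) hcoef1
      have t2 := mul_le_mul_of_nonneg_left (htail2.trans hb2) hcoef2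
      linarith
    calc ∑ y ∈ s3, f y ≤ ∑ y ∈ s3, g3 |y| := hsum1
      _ ≤ 2 * ∑ n ∈ Finset.Icc (1:ℤ) T, g3 n := hrefl
      _ = 2 * ∑ n ∈ Finset.Ioc (2*|x|) T,
          4*M*(u^γ*((n:ℤ):ℝ)^(-1-(1+γ)) + u^(-γ)*((n:ℤ):ℝ)^(-1-(1-γ))) := by
            rw [hfilter]
      _ ≤ 2 * (4*M*u^γ * ((1/2) * u^(-(1+γ))) + 4*M*u^(-γ) * (u^(-(1-γ))/(1-γ))) := by
            linarith
      _ = 4*M*(u^γ*u^(-(1+γ))) + 8*M/(1-γ)*(u^(-γ)*u^(-(1-γ))) := by ring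
      _ = (4*M + 8*M/(1-γ)) * u⁻¹ := by rw [i1, i2]; ring
  have hsplit1 := Finset.sum_filter_add_sum_filter_not (X.erase x)
    (fun y => 2*|x - y| ≤ |x|) f
  have hsplit2 := Finset.sum_filter_add_sum_filter_not
    ((X.erase x).filter (fun y => ¬ 2*|x - y| ≤ |x|)) (fun y => |y| ≤ 2*|x|) f
  have hinv : (0:ℝ) ≤ u⁻¹ := by positivity
  have hMg : (0:ℝ) ≤ M/(1-γ) := by positivity
  calc ∑ y ∈ X.erase x, f y
      = ∑ y ∈ (X.erase x).filter (fun y => 2*|x - y| ≤ |x|), f y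
        + ∑ y ∈ (X.erase x).filter (fun y => ¬ 2*|x - y| ≤ |x|), f y := hsplit1.symm
    _ = ∑ y ∈ (X.erase x).filter (fun y => 2*|x - y| ≤ |x|), f y
        + (∑ y ∈ ((X.erase x).filter (fun y => ¬ 2*|x - y| ≤ |x|)).filter
            (fun y => |y| ≤ 2*|x|), f y
          + ∑ y ∈ ((X.erase x).filter (fun y => ¬ 2*|x - y| ≤ |x|)).filter
            (fun y => ¬ |y| ≤ 2*|x|), f y) := by rw [hsplit2]
    _ ≤ 768*C^2 * u⁻¹ + ((32*M + 16*M/(1-γ)) * u⁻¹ + (4*M + 8*M/(1-γ)) * u⁻¹) := by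
        gcongr
    _ = (768*C^2 + 36*M + 24*(M/(1-γ))) * u⁻¹ := by ring
    _ = (768*C^2 + 36*(32*C^2/ε^2) + 24*(32*C^2/ε^2)/(1-(2*α+2*ε))) * u⁻¹ := by
        rw [hMdef, hγdef]; ring


theorem stmt16 (α : ℝ) (hα : α ∈ Set.Ioo (0:ℝ) (1/2)) (C : ℝ) (hC : 0 < C)
    (R : ℤ) (hR : 1 ≤ R) (K : ℤ → ℤ → ℝ)
    (hK : ∀ x y : ℤ, R ≤ |x| → R ≤ |y| → x ≠ y →
      |K x y| ≤ C * (((|x| : ℝ) / (|y| : ℝ)) ^ α + ((|y| : ℝ) / (|x| : ℝ)) ^ α) / |(x : ℝ) - (y : ℝ)|) :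
    ∃ C' : ℝ, 0 < C' ∧ ∀ T : ℤ, R < T →
      (∑ x ∈ (Finset.Icc (-T) T).filter (fun x => R ≤ |x|),
        ∑ y ∈ ((Finset.Icc (-T) T).filter (fun y => R ≤ |y|)).erase x,
          ((Real.log |(x:ℝ)| - Real.log |(y:ℝ)|) / Real.log (T:ℝ))^2 * (K x y)^2)
        ≤ C' / Real.log (T : ℝ) := by
  obtain ⟨hα0, hα2⟩ := hα
  set ε : ℝ := (1-2*α)/4 with hεdef
  have hε : 0 < ε := by rw [hεdef]; linarith
  have h1γ : 0 < 1 - (2*α+2*ε) := by rw [hεdef]; linarith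
  set B : ℝ := 768*C^2 + 36*(32*C^2/ε^2) + 24*(32*C^2/ε^2)/(1-(2*α+2*ε)) with hBdef
  have hB : 0 < B := by
    have h1 : (0:ℝ) < 768*C^2 := by positivity
    have h2 : (0:ℝ) < 36*(32*C^2/ε^2) := by positivity
    have h3 : (0:ℝ) < 24*(32*C^2/ε^2)/(1-(2*α+2*ε)) := div_pos (by positivity) h1γ
    rw [hBdef]; linarith
  have hlog2 : (0:ℝ) < Real.log 2 := Real.log_pos one_lt_two
  have hinvlog2 : (0:ℝ) < 1/Real.log 2 := by positivity
  set C' : ℝ := 2*B*(1/Real.log 2 + 1) with hC'def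
  have hC' : 0 < C' := by
    rw [hC'def]
    apply mul_pos (by linarith) (by linarith)
  refine ⟨C', hC', ?_⟩
  intro T hT
  have hT1 : (1:ℤ) ≤ T := by omega
  have hT2 : (2:ℤ) ≤ T := by omega
  have hT2R : (2:ℝ) ≤ (T:ℝ) := by exact_mod_cast hT2
  have hlogT : Real.log 2 ≤ Real.log T := Real.log_le_log (by norm_num) hT2R
  have hlogTpos : (0:ℝ) < Real.log T := lt_of_lt_of_le hlog2 hlogT
  set L : ℝ := Real.log T with hL
  set X := (Finset.Icc (-T) T).filter (fun x => R ≤ |x|) with hX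
  have hS : (∑ x ∈ X, ∑ y ∈ X.erase x,
        ((Real.log |(x:ℝ)| - Real.log |(y:ℝ)|) / L)^2 * (K x y)^2)
      = (∑ x ∈ X, ∑ y ∈ X.erase x,
        (Real.log |(x:ℝ)| - Real.log |(y:ℝ)|)^2 * (K x y)^2) / L^2 := by
    rw [Finset.sum_div]
    refine Finset.sum_congr rfl (fun x _ => ?_)
    rw [Finset.sum_div]
    refine Finset.sum_congr rfl (fun y _ => ?_)
    rw [div_pow]; ring
  have hsum1 : (∑ x ∈ X, ∑ y ∈ X.erase x,
        (Real.log |(x:ℝ)| - Real.log |(y:ℝ)|)^2 * (K x y)^2)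
      ≤ ∑ x ∈ X, B * (((|x|:ℤ):ℝ))⁻¹ := by
    refine Finset.sum_le_sum (fun x hx => ?_)
    have := inner_bound α C ε hα0 hα2 hC hεdef R T hR hT K hK x hx
    rw [hBdef]
    exact this
  have hmem : ∀ x ∈ X, 1 ≤ |x| ∧ |x| ≤ T := by
    intro x hx
    rw [hX, Finset.mem_filter, Finset.mem_Icc] at hx
    constructor
    · exact le_trans hR hx.2
    · rcases abs_cases x with ⟨h,h'⟩|⟨h,h'⟩ <;> omega
  have hgnn : ∀ n : ℤ, 1 ≤ n → n ≤ T → 0 ≤ B * ((n:ℤ):ℝ)⁻¹ := by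
    intro n h1 _
    have : (0:ℝ) < (n:ℝ) := by exact_mod_cast h1
    positivity
  have hsum2 := refl_sum X T hT1 hmem (fun n => B * ((n:ℤ):ℝ)⁻¹) hgnn
  have hsum3 : ∑ n ∈ Finset.Icc (1:ℤ) T, B * ((n:ℤ):ℝ)⁻¹ ≤ B * (1 + L) := by
    rw [← Finset.mul_sum]
    have := harmonic_bound T hT1
    exact mul_le_mul_of_nonneg_left this hB.le
  have hnum : (∑ x ∈ X, ∑ y ∈ X.erase x,
        (Real.log |(x:ℝ)| - Real.log |(y:ℝ)|)^2 * (K x y)^2) ≤ 2*B*(1+L) := by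
    calc (∑ x ∈ X, ∑ y ∈ X.erase x,
          (Real.log |(x:ℝ)| - Real.log |(y:ℝ)|)^2 * (K x y)^2)
        ≤ ∑ x ∈ X, B * (((|x|:ℤ):ℝ))⁻¹ := hsum1
      _ ≤ 2 * ∑ n ∈ Finset.Icc (1:ℤ) T, B * ((n:ℤ):ℝ)⁻¹ := hsum2
      _ ≤ 2 * (B * (1+L)) := by linarith
      _ = 2*B*(1+L) := by ring
  have hnonneg : (0:ℝ) ≤ ∑ x ∈ X, ∑ y ∈ X.erase x,
      (Real.log |(x:ℝ)| - Real.log |(y:ℝ)|)^2 * (K x y)^2 := by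
    refine Finset.sum_nonneg (fun x _ => Finset.sum_nonneg (fun y _ => ?_))
    positivity
  have hfinal : 2*B*(1+L) / L^2 ≤ C' / L := by
    rw [div_le_div_iff₀ (by positivity) hlogTpos]
    have hL1 : 1 ≤ L / Real.log 2 := (one_le_div hlog2).mpr hlogT
    have hE : 2*B ≤ 2*B*(L/Real.log 2) := by
      have := mul_le_mul_of_nonneg_left hL1 (by linarith : (0:ℝ) ≤ 2*B)
      linarith
    have h5 : 2*B*(1+L) ≤ C'*L := by
      have hexp : C'*L = 2*B*(L/Real.log 2) + 2*B*L := by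
        rw [hC'def]; field_simp
      rw [hexp]
      nlinarith [hE, mul_pos hB hlogTpos]
    calc 2*B*(1+L) * L ≤ C'*L * L :=
          mul_le_mul_of_nonneg_right h5 hlogTpos.le
      _ = C' * L^2 := by ring
  rw [hS]
  calc (∑ x ∈ X, ∑ y ∈ X.erase x,
        (Real.log |(x:ℝ)| - Real.log |(y:ℝ)|)^2 * (K x y)^2) / L^2
      ≤ 2*B*(1+L) / L^2 := by gcongr
    _ ≤ C' / L := hfinal
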